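/- Let C ⊆ ℝⁿ be a nonempty, closed and convex set, x₀ ∈ C, and let v be a standard Gaussian vector on ℝⁿ. Let prox_C(y) = argmin_{x∈C} ‖y − x‖₂ (the metric projection of y onto C). Then sup_{σ>0} E[‖prox_C(x₀+σv) − x₀‖₂²]/σ² = D(T_C(x₀)*), and the supremum is achieved in the limit σ → 0. -/

import Mathlib

open MeasureTheory ProbabilityTheory Filter Topology Metric
open scoped RealInnerProductSpace ENNReal Pointwise

noncomputable section

/-- Standard Gaussian measure on `ℝⁿ` (mean zero, identity covariance). -/
def stdGaussian (n : ℕ) : Measure (EuclideanSpace ℝ (Fin n)) :=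
  Measure.map (⇑(EuclideanSpace.equiv (Fin n) ℝ).symm)
    (Measure.pi fun _ : Fin n => gaussianReal 0 1)

/-- `D(K)`: mean squared distance of a standard Gaussian vector to `K`. -/
def msd (n : ℕ) (K : Set (EuclideanSpace ℝ (Fin n))) : ℝ :=
  ∫ g, (Metric.infDist g K) ^ 2 ∂(stdGaussian n)

variable {E : Type*} [NormedAddCommGroup E] [InnerProductSpace ℝ E]

/-- Subdifferential of `f` at `x₀`. -/
def subdiff (f : E → ℝ) (x₀ : E) : Set E :=
  {s | ∀ x, f x₀ + ⟪s, x - x₀⟫ ≤ f x}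

/-- Cone generated by a set: `{c • x : c ≥ 0, x ∈ A}`. -/
def coneOf (A : Set E) : Set E :=
  {y | ∃ c : ℝ, 0 ≤ c ∧ ∃ x ∈ A, y = c • x}

/-- Set of feasible directions of `C` at `x₀`. -/
def feasible (C : Set E) (x₀ : E) : Set E := {z | x₀ + z ∈ C}

/-- Tangent cone of `C` at `x₀`: the closure of the cone of feasible directions. -/
def tangentConeOf (C : Set E) (x₀ : E) : Set E := closure (coneOf (feasible C x₀))

/-- Polar cone of a set `K`. -/
def polarCone (K : Set E) : Set E := {v | ∀ x ∈ K, ⟪v, x⟫ ≤ 0}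

open Classical in
/-- Metric projection onto `K` (the unique nearest point when `K` is nonempty,
closed and convex). -/
def projSet (K : Set E) (x : E) : E :=
  if h : ∃ y ∈ K, dist x y = Metric.infDist x K then h.choose else x

/-- Matrix-vector multiplication as a map between Euclidean spaces. -/
def matVec {m n : ℕ} (A : Matrix (Fin m) (Fin n) ℝ) (x : EuclideanSpace ℝ (Fin n)) :
    EuclideanSpace ℝ (Fin m) :=
  (EuclideanSpace.equiv (Fin m) ℝ).symm (A.mulVec (EuclideanSpace.equiv (Fin n) ℝ x))

/-- Statistical dimension of `K`: `E ‖Proj(g,K)‖²` for standard Gaussian `g`. -/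
def statDim (n : ℕ) (K : Set (EuclideanSpace ℝ (Fin n))) : ℝ :=
  ∫ g, ‖projSet K g‖ ^ 2 ∂(stdGaussian n)

end

/-! ### Auxiliary lemmas -/

noncomputable section Aux
set_option linter.unusedSectionVars false

variable {E : Type*} [NormedAddCommGroup E] [InnerProductSpace ℝ E] [CompleteSpace E] {S : Set E}

theorem projSet_spec' (hne : S.Nonempty) (hcl : IsClosed S) (hconv : Convex ℝ S) (x : E) :
    projSet S x ∈ S ∧ dist x (projSet S x) = infDist x S := by
  have hex : ∃ y ∈ S, dist x y = infDist x S := by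
    obtain ⟨v, hv, hv2⟩ := exists_norm_eq_iInf_of_complete_convex hne hcl.isComplete hconv x
    refine ⟨v, hv, ?_⟩
    rw [dist_eq_norm, hv2, infDist_eq_iInf]
    simp_rw [dist_eq_norm]
  rw [projSet, dif_pos hex]
  exact ⟨hex.choose_spec.1, hex.choose_spec.2⟩

theorem projSet_mem' (hne : S.Nonempty) (hcl : IsClosed S) (hconv : Convex ℝ S) (x : E) :
    projSet S x ∈ S := (projSet_spec' hne hcl hconv x).1

theorem projSet_inner_le' (hne : S.Nonempty) (hcl : IsClosed S) (hconv : Convex ℝ S) (x : E)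
    {z : E} (hz : z ∈ S) : ⟪x - projSet S x, z - projSet S x⟫ ≤ 0 := by
  obtain ⟨hmem, hdist⟩ := projSet_spec' hne hcl hconv x
  have h : ‖x - projSet S x‖ = ⨅ w : S, ‖x - w‖ := by
    rw [← dist_eq_norm, hdist, infDist_eq_iInf]
    simp_rw [dist_eq_norm]
  exact (norm_eq_iInf_iff_real_inner_le_zero hconv hmem).1 h z hz

theorem projSet_nonexpansive (hne : S.Nonempty) (hcl : IsClosed S) (hconv : Convex ℝ S)
    (x y : E) : dist (projSet S x) (projSet S y) ≤ dist x y := by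
  set p := projSet S x
  set q := projSet S y
  have h1 : ⟪x - p, q - p⟫ ≤ 0 := projSet_inner_le' hne hcl hconv x (projSet_mem' hne hcl hconv y)
  have h2 : ⟪y - q, p - q⟫ ≤ 0 := projSet_inner_le' hne hcl hconv y (projSet_mem' hne hcl hconv x)
  have key : ‖p - q‖ ^ 2 ≤ ⟪x - y, p - q⟫ := by
    have e1 : ⟪x - p, p - q⟫ ≥ 0 := by
      have : q - p = -(p - q) := by abel
      rw [this, inner_neg_right] at h1; linarith
    have e2 : ⟪y - q, p - q⟫ ≤ 0 := h2
    have : ⟪x - y, p - q⟫ = ⟪x - p, p - q⟫ - ⟪y - q, p - q⟫ + ⟪p - q, p - q⟫ := by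
      rw [← inner_sub_left, ← inner_add_left]; congr 1; abel
    rw [this, real_inner_self_eq_norm_sq]
    linarith
  have hcs : ⟪x - y, p - q⟫ ≤ ‖x - y‖ * ‖p - q‖ := real_inner_le_norm _ _
  rw [dist_eq_norm, dist_eq_norm]
  nlinarith [norm_nonneg (p - q), norm_nonneg (x - y)]

theorem projSet_continuous (hne : S.Nonempty) (hcl : IsClosed S) (hconv : Convex ℝ S) :
    Continuous (projSet S) := by
  refine LipschitzWith.continuous (K := 1) ?_
  refine LipschitzWith.of_dist_le_mul fun x y => ?_
  simpa using projSet_nonexpansive hne hcl hconv x y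

theorem zero_mem_coneOf {A : Set E} (h : (0:E) ∈ A) : (0:E) ∈ coneOf A :=
  ⟨0, le_refl 0, 0, h, (zero_smul ℝ _).symm⟩

theorem smul_mem_coneOf {A : Set E} {c : ℝ} (hc : 0 ≤ c) {y : E} (hy : y ∈ coneOf A) :
    c • y ∈ coneOf A := by
  obtain ⟨c', hc', x, hx, rfl⟩ := hy
  exact ⟨c * c', mul_nonneg hc hc', x, hx, (smul_smul c c' x)⟩

theorem coneOf_convex {A : Set E} (h0 : (0:E) ∈ A) (hA : Convex ℝ A) : Convex ℝ (coneOf A) := by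
  rintro y₁ ⟨c₁, hc₁, x₁, hx₁, rfl⟩ y₂ ⟨c₂, hc₂, x₂, hx₂, rfl⟩ a b ha hb hab
  by_cases hc : a * c₁ + b * c₂ = 0
  · have h1 : a * c₁ = 0 := by nlinarith
    have h2 : b * c₂ = 0 := by nlinarith
    have : a • c₁ • x₁ + b • c₂ • x₂ = (0:E) := by
      rw [smul_smul, smul_smul, h1, h2]; simp
    rw [this]
    exact zero_mem_coneOf h0
  · have hcpos : 0 < a * c₁ + b * c₂ := lt_of_le_of_ne (by positivity) (Ne.symm hc)
    refine ⟨a * c₁ + b * c₂, hcpos.le,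
      (a * c₁ / (a * c₁ + b * c₂)) • x₁ + (b * c₂ / (a * c₁ + b * c₂)) • x₂,
      hA hx₁ hx₂ (by positivity) (by positivity) (by field_simp), ?_⟩
    rw [smul_add, smul_smul, smul_smul, smul_smul, smul_smul]
    congr 2 <;> field_simp

theorem key_mono {C : Set E} (hcl : IsClosed C) (hconv : Convex ℝ C) {x₀ : E} (hx₀ : x₀ ∈ C)
    (w : E) {σ₁ σ₂ : ℝ} (h1 : 0 < σ₁) (h12 : σ₁ ≤ σ₂) :
    ‖σ₂⁻¹ • (projSet C (x₀ + σ₂ • w) - x₀)‖ ≤ ‖σ₁⁻¹ • (projSet C (x₀ + σ₁ • w) - x₀)‖ := by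
  have h2 : 0 < σ₂ := lt_of_lt_of_le h1 h12
  have hne : C.Nonempty := ⟨x₀, hx₀⟩
  set p₁ := projSet C (x₀ + σ₁ • w) with hp₁
  set p₂ := projSet C (x₀ + σ₂ • w) with hp₂
  have hm₁ : p₁ ∈ C := projSet_mem' hne hcl hconv _
  have hm₂ : p₂ ∈ C := projSet_mem' hne hcl hconv _
  set q₁ := σ₁⁻¹ • (p₁ - x₀) with hq₁
  set q₂ := σ₂⁻¹ • (p₂ - x₀) with hq₂
  have e₁ : p₁ - x₀ = σ₁ • q₁ := by rw [hq₁, smul_inv_smul₀ h1.ne']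
  have e₂ : p₂ - x₀ = σ₂ • q₂ := by rw [hq₂, smul_inv_smul₀ h2.ne']
  have A := projSet_inner_le' hne hcl hconv (x₀ + σ₁ • w) hm₂
  have B := projSet_inner_le' hne hcl hconv (x₀ + σ₂ • w) hm₁
  rw [← hp₁] at A
  rw [← hp₂] at B
  have eA1 : x₀ + σ₁ • w - p₁ = σ₁ • (w - q₁) := by
    rw [smul_sub, ← e₁]; abel
  have eA2 : p₂ - p₁ = σ₂ • q₂ - σ₁ • q₁ := by
    rw [← e₁, ← e₂]; abel
  have eB1 : x₀ + σ₂ • w - p₂ = σ₂ • (w - q₂) := by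
    rw [smul_sub, ← e₂]; abel
  have eB2 : p₁ - p₂ = σ₁ • q₁ - σ₂ • q₂ := by
    rw [← e₁, ← e₂]; abel
  rw [eA1, eA2, real_inner_smul_left] at A
  rw [eB1, eB2, real_inner_smul_left] at B
  have hA : ⟪w - q₁, σ₂ • q₂ - σ₁ • q₁⟫ ≤ 0 := nonpos_of_mul_nonpos_right A h1
  have hB : ⟪w - q₂, σ₁ • q₁ - σ₂ • q₂⟫ ≤ 0 := nonpos_of_mul_nonpos_right B h2
  simp only [inner_sub_left, inner_sub_right, real_inner_smul_right] at hA hB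
  have hcomm : ⟪q₂, q₁⟫ = ⟪q₁, q₂⟫ := real_inner_comm _ _
  have hs1 : ⟪q₁, q₁⟫ = ‖q₁‖ ^ 2 := real_inner_self_eq_norm_sq _
  have hs2 : ⟪q₂, q₂⟫ = ‖q₂‖ ^ 2 := real_inner_self_eq_norm_sq _
  rw [hs1] at hA
  rw [hs2, hcomm] at hB
  have hsum : σ₁ * ‖q₁‖ ^ 2 + σ₂ * ‖q₂‖ ^ 2 ≤ (σ₁ + σ₂) * ⟪q₁, q₂⟫ := by linarith
  have hcs : ⟪q₁, q₂⟫ ≤ ‖q₁‖ * ‖q₂‖ := real_inner_le_norm _ _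
  have h1' : 0 ≤ ‖q₁‖ := norm_nonneg _
  have h2' : 0 ≤ ‖q₂‖ := norm_nonneg _
  by_contra hlt
  push_neg at hlt
  have ht : 0 < ‖q₂‖ := lt_of_le_of_lt h1' hlt
  have hst : σ₁ * ‖q₁‖ ^ 2 + σ₂ * ‖q₂‖ ^ 2 ≤ (σ₁ + σ₂) * (‖q₁‖ * ‖q₂‖) :=
    le_trans hsum (by nlinarith)
  have hpos : 0 < (‖q₂‖ - ‖q₁‖) * (σ₂ * ‖q₂‖ - σ₁ * ‖q₁‖) :=
    mul_pos (by linarith) (by nlinarith)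
  nlinarith [hpos, hst]

section Pointwise
variable {C : Set E} {x₀ w : E}

theorem Q_mem_cone (hcl : IsClosed C) (hconv : Convex ℝ C) (hx₀ : x₀ ∈ C) {σ : ℝ} (hσ : 0 < σ) :
    σ⁻¹ • (projSet C (x₀ + σ • w) - x₀) ∈ coneOf (feasible C x₀) := by
  refine ⟨σ⁻¹, by positivity, projSet C (x₀ + σ • w) - x₀, ?_, rfl⟩
  show x₀ + (projSet C (x₀ + σ • w) - x₀) ∈ C
  simpa using (projSet_spec' ⟨x₀, hx₀⟩ hcl hconv (x₀ + σ • w)).1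

theorem Q_dist (hcl : IsClosed C) (hconv : Convex ℝ C) (hx₀ : x₀ ∈ C) {σ : ℝ} (hσ : 0 < σ) :
    ‖w - σ⁻¹ • (projSet C (x₀ + σ • w) - x₀)‖ = σ⁻¹ * infDist (x₀ + σ • w) C := by
  have key : w - σ⁻¹ • (projSet C (x₀ + σ • w) - x₀)
      = σ⁻¹ • ((x₀ + σ • w) - projSet C (x₀ + σ • w)) := by
    have h := hσ.ne'
    match_scalars <;> field_simp
  rw [key, norm_smul, Real.norm_eq_abs, abs_of_pos (inv_pos.mpr hσ),
    ← (projSet_spec' ⟨x₀, hx₀⟩ hcl hconv (x₀ + σ • w)).2, dist_eq_norm]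

theorem key_bound (hcl : IsClosed C) (hconv : Convex ℝ C) (hx₀ : x₀ ∈ C) {σ : ℝ} (hσ : 0 < σ) :
    ‖σ⁻¹ • (projSet C (x₀ + σ • w) - x₀)‖ ≤ 2 * ‖w‖ := by
  set p := projSet C (x₀ + σ • w) with hp
  have hd : dist (x₀ + σ • w) p ≤ σ * ‖w‖ := by
    have := (projSet_spec' ⟨x₀, hx₀⟩ hcl hconv (x₀ + σ • w)).2
    rw [this]
    calc infDist (x₀ + σ • w) C ≤ dist (x₀ + σ • w) x₀ := infDist_le_dist_of_mem hx₀
    _ = σ * ‖w‖ := by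
        rw [dist_eq_norm]
        simp [norm_smul, abs_of_pos hσ]
  have hy : ‖p - x₀‖ ≤ 2 * σ * ‖w‖ := by
    have h1 : ‖p - x₀‖ ≤ ‖p - (x₀ + σ • w)‖ + ‖σ • w‖ := by
      have : p - x₀ = (p - (x₀ + σ • w)) + σ • w := by abel
      rw [this]; exact norm_add_le _ _
    have h2 : ‖p - (x₀ + σ • w)‖ = dist (x₀ + σ • w) p := by rw [dist_eq_norm, norm_sub_rev]
    have h3 : ‖σ • w‖ = σ * ‖w‖ := by simp [norm_smul, abs_of_pos hσ]
    linarith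
  rw [norm_smul]
  simp only [norm_inv, Real.norm_eq_abs, abs_of_pos hσ]
  rw [inv_mul_le_iff₀ hσ]
  calc ‖p - x₀‖ ≤ 2 * σ * ‖w‖ := hy
  _ = σ * (2 * ‖w‖) := by ring

theorem key_tendsto_dist (hcl : IsClosed C) (hconv : Convex ℝ C) (hx₀ : x₀ ∈ C) :
    Tendsto (fun σ : ℝ => ‖w - σ⁻¹ • (projSet C (x₀ + σ • w) - x₀)‖)
      (𝓝[>] (0:ℝ)) (𝓝 (infDist w (tangentConeOf C x₀))) := by
  have h0feas : (0:E) ∈ feasible C x₀ := by simpa [feasible] using hx₀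
  have hconeNe : (coneOf (feasible C x₀)).Nonempty := ⟨0, zero_mem_coneOf h0feas⟩
  rw [tendsto_order]
  constructor
  · intro a ha
    filter_upwards [eventually_mem_nhdsWithin] with σ hσ
    have hσ' : (0:ℝ) < σ := hσ
    have hmem := Q_mem_cone hcl hconv hx₀ (w := w) hσ'
    have : infDist w (tangentConeOf C x₀) ≤ ‖w - σ⁻¹ • (projSet C (x₀ + σ • w) - x₀)‖ := by
      rw [← dist_eq_norm]
      exact infDist_le_dist_of_mem (subset_closure hmem)
    linarith
  · intro a ha
    rw [tangentConeOf, infDist_closure] at ha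
    obtain ⟨u, hu, hua⟩ := (infDist_lt_iff hconeNe).mp ha
    obtain ⟨c, hc, z, hz, rfl⟩ := hu
    have hzC : x₀ + z ∈ C := hz
    filter_upwards [Ioc_mem_nhdsGT_of_mem
      (by constructor <;> [rfl; positivity] : (0:ℝ) ∈ Set.Ico 0 (1/(c+1)))] with σ hσ
    obtain ⟨hσ0, hσle⟩ := hσ
    have hσc : σ * c ≤ 1 := by
      rw [le_div_iff₀ (by positivity : (0:ℝ) < c + 1)] at hσle
      nlinarith
    have hσc0 : 0 ≤ σ * c := by positivity
    have hmemC : x₀ + σ • c • z ∈ C := by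
      have := hconv hx₀ hzC (by linarith : (0:ℝ) ≤ 1 - σ * c) hσc0 (by ring)
      convert this using 1
      rw [smul_smul, smul_add]
      module
    have hle : ‖w - σ⁻¹ • (projSet C (x₀ + σ • w) - x₀)‖ ≤ dist w (c • z) := by
      rw [Q_dist hcl hconv hx₀ hσ0]
      have h1 : infDist (x₀ + σ • w) C ≤ dist (x₀ + σ • w) (x₀ + σ • c • z) :=
        infDist_le_dist_of_mem hmemC
      have h2 : dist (x₀ + σ • w) (x₀ + σ • c • z) = σ * dist w (c • z) := by
        rw [dist_eq_norm, dist_eq_norm]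
        have : x₀ + σ • w - (x₀ + σ • c • z) = σ • (w - c • z) := by
          rw [smul_sub]; abel
        rw [this, norm_smul]
        simp [abs_of_pos hσ0]
      rw [inv_mul_le_iff₀ hσ0, ← h2]
      exact h1
    linarith
end Pointwise

section Tangent
variable {C : Set E} {x₀ : E}

theorem tangent_closed : IsClosed (tangentConeOf C x₀) := isClosed_closure

theorem tangent_zero_mem (hx₀ : x₀ ∈ C) : (0:E) ∈ tangentConeOf C x₀ :=
  subset_closure (zero_mem_coneOf (by simpa [feasible] using hx₀))

theorem feasible_convex (hconv : Convex ℝ C) : Convex ℝ (feasible C x₀) := by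
  intro z₁ h₁ z₂ h₂ a b ha hb hab
  show x₀ + (a • z₁ + b • z₂) ∈ C
  have := hconv h₁ h₂ ha hb hab
  convert this using 1
  match_scalars <;> linarith

theorem tangent_convex (hconv : Convex ℝ C) (hx₀ : x₀ ∈ C) : Convex ℝ (tangentConeOf C x₀) :=
  (coneOf_convex (by simpa [feasible] using hx₀) (feasible_convex hconv)).closure

theorem tangent_smul_mem {c : ℝ} (hc : 0 ≤ c) {y : E} (hy : y ∈ tangentConeOf C x₀) :
    c • y ∈ tangentConeOf C x₀ :=
  map_mem_closure (continuous_const_smul c) hy (fun _ hz => smul_mem_coneOf hc hz)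

theorem zero_mem_polarCone (K : Set E) : (0:E) ∈ polarCone K := by
  intro x hx
  simp

/-- Moreau-type identity: the distance to the polar cone equals the norm of the projection
onto the tangent cone. -/
theorem infDist_polar_eq_norm_proj (hconv : Convex ℝ C) (hx₀ : x₀ ∈ C) (w : E) :
    infDist w (polarCone (tangentConeOf C x₀)) = ‖projSet (tangentConeOf C x₀) w‖ := by
  set T := tangentConeOf C x₀ with hT
  have hTne : T.Nonempty := ⟨0, tangent_zero_mem hx₀⟩
  have hTcl : IsClosed T := tangent_closed
  have hTconv : Convex ℝ T := tangent_convex hconv hx₀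
  set p := projSet T w with hp
  have hpmem : p ∈ T := (projSet_spec' hTne hTcl hTconv w).1
  have horth : ⟪w - p, p⟫ = 0 := by
    have h0 := projSet_inner_le' hTne hTcl hTconv w (tangent_zero_mem hx₀)
    have h2 := projSet_inner_le' hTne hTcl hTconv w
      (tangent_smul_mem (by norm_num : (0:ℝ) ≤ 2) hpmem)
    rw [zero_sub, inner_neg_right] at h0
    have e : (2:ℝ) • p - p = p := by module
    rw [← hp, e] at h2
    rw [← hp] at h0
    linarith
  have hzpol : w - p ∈ polarCone T := by
    intro x hx
    have hVI := projSet_inner_le' hTne hTcl hTconv w hx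
    rw [← hp] at hVI
    have : ⟪w - p, x⟫ = ⟪w - p, x - p⟫ + ⟪w - p, p⟫ := by
      rw [← inner_add_right]
      congr 1
      abel
    rw [this, horth]
    linarith
  refine le_antisymm ?_ ?_
  · calc infDist w (polarCone T) ≤ dist w (w - p) := infDist_le_dist_of_mem hzpol
    _ = ‖p‖ := by rw [dist_eq_norm]; congr 1; abel
  · by_contra hlt
    push_neg at hlt
    obtain ⟨v, hv, hvd⟩ := (infDist_lt_iff ⟨0, zero_mem_polarCone T⟩).mp hlt
    have hexp : ‖w - v‖ ^ 2 = ‖p‖ ^ 2 + 2 * ⟪p, (w - p) - v⟫ + ‖(w - p) - v‖ ^ 2 := by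
      have e : w - v = p + ((w - p) - v) := by abel
      rw [e, norm_add_sq_real]
    have h1 : ⟪p, w - p⟫ = 0 := by rw [real_inner_comm]; exact horth
    have h2 : ⟪v, p⟫ ≤ 0 := hv p hpmem
    have h3 : ⟪p, (w - p) - v⟫ = ⟪p, w - p⟫ - ⟪p, v⟫ := inner_sub_right _ _ _
    have h4 : ⟪p, v⟫ = ⟪v, p⟫ := real_inner_comm _ _
    have hge : ‖p‖ ^ 2 ≤ ‖w - v‖ ^ 2 := by
      rw [hexp, h3, h1, h4]
      nlinarith [sq_nonneg ‖(w - p) - v‖]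
    have : ‖p‖ ≤ ‖w - v‖ := by
      nlinarith [norm_nonneg (w - v), norm_nonneg p]
    rw [← dist_eq_norm] at this
    linarith
end Tangent

section Limits
variable {C : Set E} {x₀ w : E}

theorem key_tendsto_Q (hcl : IsClosed C) (hconv : Convex ℝ C) (hx₀ : x₀ ∈ C) :
    Tendsto (fun σ : ℝ => σ⁻¹ • (projSet C (x₀ + σ • w) - x₀)) (𝓝[>] (0:ℝ))
      (𝓝 (projSet (tangentConeOf C x₀) w)) := by
  set T := tangentConeOf C x₀ with hT
  have hTne : T.Nonempty := ⟨0, tangent_zero_mem hx₀⟩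
  have hTcl : IsClosed T := tangent_closed
  have hTconv : Convex ℝ T := tangent_convex hconv hx₀
  set p := projSet T w with hp
  have hpmem : p ∈ T := (projSet_spec' hTne hTcl hTconv w).1
  have hpd : ‖w - p‖ = infDist w T := by
    rw [← dist_eq_norm]; exact (projSet_spec' hTne hTcl hTconv w).2
  set L := infDist w T with hL
  set Q : ℝ → E := fun σ => σ⁻¹ • (projSet C (x₀ + σ • w) - x₀) with hQ
  have hsq : ∀ σ : ℝ, 0 < σ → ‖p - Q σ‖ ^ 2 ≤ 2 * ‖w - Q σ‖ ^ 2 - 2 * L ^ 2 := by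
    intro σ hσ
    have hQT : Q σ ∈ T := subset_closure (Q_mem_cone hcl hconv hx₀ hσ)
    have hmid : (2⁻¹ : ℝ) • Q σ + (2⁻¹ : ℝ) • p ∈ T :=
      hTconv hQT hpmem (by norm_num) (by norm_num) (by norm_num)
    have hmidd : L ≤ ‖w - ((2⁻¹ : ℝ) • Q σ + (2⁻¹ : ℝ) • p)‖ := by
      rw [← dist_eq_norm]; exact infDist_le_dist_of_mem hmid
    set a := w - Q σ
    set b := w - p
    have e1 : ‖a - b‖ ^ 2 = ‖a‖ ^ 2 - 2 * ⟪a, b⟫ + ‖b‖ ^ 2 := norm_sub_sq_real a b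
    have e2 : ‖a + b‖ ^ 2 = ‖a‖ ^ 2 + 2 * ⟪a, b⟫ + ‖b‖ ^ 2 := norm_add_sq_real a b
    have eab : a - b = p - Q σ := by simp only [a, b]; abel
    have emid : a + b = (2:ℝ) • (w - ((2⁻¹ : ℝ) • Q σ + (2⁻¹ : ℝ) • p)) := by
      simp only [a, b]; module
    have hab : (2 * L) ^ 2 ≤ ‖a + b‖ ^ 2 := by
      rw [emid, norm_smul]
      simp only [Real.norm_ofNat]
      have hL0 : 0 ≤ L := infDist_nonneg
      have := hmidd
      nlinarith
    have hbL : ‖b‖ = L := hpd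
    have e1' : ‖p - Q σ‖ ^ 2 = ‖a‖ ^ 2 - 2 * ⟪a, b⟫ + ‖b‖ ^ 2 := by rw [← eab]; exact e1
    rw [hbL] at e1' e2
    nlinarith [e1', e2, hab]
  have hdist_t : Tendsto (fun σ : ℝ => ‖w - Q σ‖) (𝓝[>] (0:ℝ)) (𝓝 L) :=
    key_tendsto_dist hcl hconv hx₀
  have hg : Tendsto (fun σ : ℝ => 2 * ‖w - Q σ‖ ^ 2 - 2 * L ^ 2) (𝓝[>] (0:ℝ)) (𝓝 0) := by
    have : Tendsto (fun σ : ℝ => 2 * ‖w - Q σ‖ ^ 2 - 2 * L ^ 2) (𝓝[>] (0:ℝ))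
        (𝓝 (2 * L ^ 2 - 2 * L ^ 2)) := ((hdist_t.pow 2).const_mul 2).sub_const _
    simpa using this
  have hsq0 : Tendsto (fun σ : ℝ => ‖p - Q σ‖ ^ 2) (𝓝[>] (0:ℝ)) (𝓝 0) := by
    refine squeeze_zero' ?_ ?_ hg
    · filter_upwards with σ using sq_nonneg _
    · filter_upwards [eventually_mem_nhdsWithin] with σ hσ
      exact hsq σ hσ
  have hnorm0 : Tendsto (fun σ : ℝ => ‖p - Q σ‖) (𝓝[>] (0:ℝ)) (𝓝 0) := by
    have := hsq0.sqrt
    simpa [Real.sqrt_sq (norm_nonneg _)] using this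
  rw [tendsto_iff_norm_sub_tendsto_zero]
  simpa [norm_sub_rev] using hnorm0

theorem key_tendsto_norm (hcl : IsClosed C) (hconv : Convex ℝ C) (hx₀ : x₀ ∈ C) :
    Tendsto (fun σ : ℝ => ‖σ⁻¹ • (projSet C (x₀ + σ • w) - x₀)‖ ^ 2) (𝓝[>] (0:ℝ))
      (𝓝 ((infDist w (polarCone (tangentConeOf C x₀))) ^ 2)) := by
  rw [infDist_polar_eq_norm_proj hconv hx₀]
  exact ((key_tendsto_Q hcl hconv hx₀).norm).pow 2

theorem key_le_limit (hcl : IsClosed C) (hconv : Convex ℝ C) (hx₀ : x₀ ∈ C) {σ : ℝ} (hσ : 0 < σ) :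
    ‖σ⁻¹ • (projSet C (x₀ + σ • w) - x₀)‖ ^ 2
      ≤ (infDist w (polarCone (tangentConeOf C x₀))) ^ 2 := by
  have hmono : ∀ᶠ σ' in 𝓝[>] (0:ℝ),
      ‖σ⁻¹ • (projSet C (x₀ + σ • w) - x₀)‖ ^ 2
        ≤ ‖σ'⁻¹ • (projSet C (x₀ + σ' • w) - x₀)‖ ^ 2 := by
    filter_upwards [Ioc_mem_nhdsGT_of_mem
      (by constructor <;> [rfl; exact hσ] : (0:ℝ) ∈ Set.Ico 0 σ)] with σ' hσ'
    have := key_mono (w := w) hcl hconv hx₀ hσ'.1 hσ'.2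
    have h0 : 0 ≤ ‖σ'⁻¹ • (projSet C (x₀ + σ' • w) - x₀)‖ := norm_nonneg _
    nlinarith [norm_nonneg (σ⁻¹ • (projSet C (x₀ + σ • w) - x₀))]
  exact ge_of_tendsto (key_tendsto_norm hcl hconv hx₀) hmono

end Limits

/-! ### Integrability over the standard Gaussian -/

theorem measurePreserving_eval_pi {ι : Type*} [Fintype ι] [DecidableEq ι] {α : ι → Type*}
    [∀ i, MeasurableSpace (α i)] (μ : ∀ i, Measure (α i)) [∀ i, IsProbabilityMeasure (μ i)]
    (i : ι) : MeasurePreserving (Function.eval i) (Measure.pi μ) (μ i) := by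
  refine ⟨measurable_pi_apply i, ?_⟩
  refine Measure.ext fun s hs => ?_
  rw [Measure.map_apply (measurable_pi_apply i) hs]
  have : Function.eval i ⁻¹' s = Set.pi Set.univ (Function.update (fun j => Set.univ) i s) := by
    rw [Set.eval_preimage]
  rw [this, Measure.pi_pi]
  rw [Finset.prod_eq_single i]
  · simp
  · intro j _ hj
    simp [Function.update_of_ne hj]
  · simp

theorem integrable_sq_gaussian : Integrable (fun x : ℝ => x ^ 2) (gaussianReal 0 1) := by
  rw [gaussianReal_of_var_ne_zero 0 one_ne_zero]
  rw [integrable_withDensity_iff (measurable_gaussianPDF 0 1)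
    (ae_of_all _ fun x => ENNReal.ofReal_lt_top)]
  have h1 : Integrable (fun x : ℝ => x ^ (2:ℝ) * Real.exp (-(1/2) * x ^ 2)) :=
    integrable_rpow_mul_exp_neg_mul_sq (by norm_num) (by norm_num)
  have h2 : Integrable (fun x : ℝ => x ^ 2 * Real.exp (-(1/2) * x ^ 2)) := by
    convert h1 using 2 with x
    rw [← Real.rpow_natCast x 2]
    norm_num
  have h3 := h2.const_mul (Real.sqrt (2 * Real.pi))⁻¹
  refine h3.congr (ae_of_all _ fun x => ?_)
  show (√(2 * Real.pi))⁻¹ * (x ^ 2 * Real.exp (-(1/2) * x ^ 2)) = x ^ 2 * (gaussianPDF 0 1 x).toReal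
  rw [show gaussianPDF 0 1 x = ENNReal.ofReal (gaussianPDFReal 0 1 x) from rfl,
    ENNReal.toReal_ofReal (gaussianPDFReal_nonneg _ _ _), gaussianPDFReal]
  simp only [NNReal.coe_one, mul_one, sub_zero]
  rw [show -x ^ 2 / 2 = -(1/2) * x ^ 2 by ring]
  ring

theorem integrable_normsq_stdGaussian (n : ℕ) :
    Integrable (fun w => ‖w‖ ^ 2) (stdGaussian n) := by
  rw [_root_.stdGaussian]
  have hemb : MeasurableEmbedding (⇑(EuclideanSpace.equiv (Fin n) ℝ).symm) :=
    (EuclideanSpace.equiv (Fin n) ℝ).symm.toHomeomorph.measurableEmbedding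
  rw [hemb.integrable_map_iff]
  have heq : ((fun w : EuclideanSpace ℝ (Fin n) => ‖w‖ ^ 2) ∘
      ⇑(EuclideanSpace.equiv (Fin n) ℝ).symm) = fun x : Fin n → ℝ => ∑ i, (x i) ^ 2 := by
    funext x
    simp only [Function.comp_apply]
    rw [EuclideanSpace.norm_eq, Real.sq_sqrt (by positivity)]
    congr 1
    funext i
    simp [Real.norm_eq_abs, sq_abs]
  rw [heq]
  refine integrable_finset_sum _ fun i _ => ?_
  have := (measurePreserving_eval_pi (fun _ : Fin n => gaussianReal 0 1) i).integrable_comp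
    (g := fun x : ℝ => x ^ 2) (by fun_prop)
  exact this.mpr integrable_sq_gaussian

end Aux

/-- Constrained denoising.
For a nonempty closed convex `C ∋ x₀` and standard Gaussian noise, the supremum over
`σ > 0` of the normalized MSE of the metric projection onto `C` equals
`D(T_C(x₀)*)`, and it is attained in the limit `σ → 0`. -/
theorem statement1 {n : ℕ} (C : Set (EuclideanSpace ℝ (Fin n)))
    (hCne : C.Nonempty) (hCcl : IsClosed C) (hCconv : Convex ℝ C)
    (x₀ : EuclideanSpace ℝ (Fin n)) (hx₀ : x₀ ∈ C) :
    IsLUB {e : ℝ | ∃ σ : ℝ, 0 < σ ∧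
        e = (∫ w, ‖projSet C (x₀ + σ • w) - x₀‖ ^ 2 ∂(stdGaussian n)) / σ ^ 2}
      (msd n (polarCone (tangentConeOf C x₀))) ∧
    Tendsto
      (fun σ : ℝ => (∫ w, ‖projSet C (x₀ + σ • w) - x₀‖ ^ 2 ∂(stdGaussian n)) / σ ^ 2)
      (nhdsWithin 0 (Set.Ioi 0)) (nhds (msd n (polarCone (tangentConeOf C x₀)))) := by
  set K := polarCone (tangentConeOf C x₀) with hK
  set F : ℝ → EuclideanSpace ℝ (Fin n) → ℝ :=
    fun σ w => ‖σ⁻¹ • (projSet C (x₀ + σ • w) - x₀)‖ ^ 2 with hF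
  have hbase := integrable_normsq_stdGaussian n
  have hbound : Integrable (fun w : EuclideanSpace ℝ (Fin n) => 4 * ‖w‖ ^ 2) (stdGaussian n) :=
    hbase.const_mul 4
  have hcont : ∀ σ : ℝ, Continuous (F σ) := by
    intro σ
    have h1 : Continuous fun w : EuclideanSpace ℝ (Fin n) => x₀ + σ • w :=
      continuous_const.add (continuous_const_smul σ)
    exact ((((projSet_continuous ⟨x₀, hx₀⟩ hCcl hCconv).comp h1).sub
      continuous_const).const_smul σ⁻¹).norm.pow 2
  have hFbound : ∀ σ : ℝ, 0 < σ → ∀ w, ‖F σ w‖ ≤ 4 * ‖w‖ ^ 2 := by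
    intro σ hσ w
    have hb := key_bound (w := w) hCcl hCconv hx₀ hσ
    have h0 : 0 ≤ ‖σ⁻¹ • (projSet C (x₀ + σ • w) - x₀)‖ := norm_nonneg _
    rw [hF, Real.norm_eq_abs, abs_of_nonneg (sq_nonneg _)]
    nlinarith [norm_nonneg w]
  have hFint : ∀ σ : ℝ, 0 < σ → Integrable (F σ) (stdGaussian n) := by
    intro σ hσ
    exact hbound.mono' ((hcont σ).aestronglyMeasurable) (ae_of_all _ (hFbound σ hσ))
  have hDint : Integrable (fun w : EuclideanSpace ℝ (Fin n) => (infDist w K) ^ 2)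
      (stdGaussian n) := by
    refine hbase.mono' ((continuous_infDist_pt K).pow 2).aestronglyMeasurable
      (ae_of_all _ fun w => ?_)
    have h1 : infDist w K ≤ ‖w‖ := by
      have := infDist_le_dist_of_mem (x := w) (zero_mem_polarCone (tangentConeOf C x₀))
      rwa [dist_zero_right] at this
    have h2 : 0 ≤ infDist w K := infDist_nonneg
    rw [Real.norm_eq_abs, abs_of_nonneg (sq_nonneg _)]
    nlinarith
  have hGF : ∀ σ : ℝ, 0 < σ →
      (∫ w, ‖projSet C (x₀ + σ • w) - x₀‖ ^ 2 ∂(stdGaussian n)) / σ ^ 2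
        = ∫ w, F σ w ∂(stdGaussian n) := by
    intro σ hσ
    rw [← integral_div]
    congr 1
    funext w
    have hns : ‖σ⁻¹ • (projSet C (x₀ + σ • w) - x₀)‖
        = σ⁻¹ * ‖projSet C (x₀ + σ • w) - x₀‖ := by
      rw [norm_smul, norm_inv, Real.norm_eq_abs, abs_of_pos hσ]
    rw [hF]
    simp only
    rw [hns]
    field_simp
  have htendF : Tendsto (fun σ : ℝ => ∫ w, F σ w ∂(stdGaussian n)) (𝓝[>] (0:ℝ))
      (𝓝 (msd n K)) := by
    have : Tendsto (fun σ : ℝ => ∫ w, F σ w ∂(stdGaussian n)) (𝓝[>] (0:ℝ))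
        (𝓝 (∫ w, (infDist w K) ^ 2 ∂(stdGaussian n))) := by
      refine tendsto_integral_filter_of_dominated_convergence
        (fun w : EuclideanSpace ℝ (Fin n) => 4 * ‖w‖ ^ 2) ?_ ?_ hbound ?_
      · filter_upwards [eventually_mem_nhdsWithin] with σ hσ
        exact (hcont σ).aestronglyMeasurable
      · filter_upwards [eventually_mem_nhdsWithin] with σ hσ
        exact ae_of_all _ (hFbound σ hσ)
      · exact ae_of_all _ fun w => key_tendsto_norm hCcl hCconv hx₀ (w := w)
    exact this
  have htendG : Tendsto
      (fun σ : ℝ => (∫ w, ‖projSet C (x₀ + σ • w) - x₀‖ ^ 2 ∂(stdGaussian n)) / σ ^ 2)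
      (𝓝[>] (0:ℝ)) (𝓝 (msd n K)) := by
    refine htendF.congr' ?_
    filter_upwards [eventually_mem_nhdsWithin] with σ hσ
    exact (hGF σ hσ).symm
  refine ⟨⟨?_, ?_⟩, htendG⟩
  · rintro e ⟨σ, hσ, rfl⟩
    rw [hGF σ hσ]
    exact integral_mono (hFint σ hσ) hDint (fun w => key_le_limit hCcl hCconv hx₀ hσ)
  · intro b hb
    refine le_of_tendsto htendG ?_
    filter_upwards [eventually_mem_nhdsWithin] with σ hσ
    exact hb ⟨σ, hσ, rfl⟩
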